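/- Let p : S → A be a quasi-constant pattern with nonconstant term r and let a ∈ A with a ≠ p(e). Then τ_p^a is idempotent if and only if one of the following holds: (1) a ≠ p(s) for all s ∈ S; (2) r ≠ e and r² ∈ S; (3) r = e and S = S⁻¹. -/

import Mathlib

variable {G A : Type*}

def shift [Group G] (g : G) (x : G → A) : G → A := fun h => x (g⁻¹ * h)

def restrictPat (S : Finset G) (x : G → A) : S → A := fun s => x s

def muP [Group G] [DecidableEq A] (S : Finset G) (p : S → A) (a : A)
    (he : (1 : G) ∈ S) (z : S → A) : A :=
  if z = p then a else z ⟨1, he⟩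

def tauP [Group G] [DecidableEq A] (S : Finset G) (p : S → A) (a : A)
    (he : (1 : G) ∈ S) (x : G → A) : G → A :=
  fun g => muP S p a he (restrictPat S (shift g⁻¹ x))

theorem quasiConstant_idempotent_characterization [Group G] [Fintype A] [DecidableEq A]
    (hA : 2 ≤ Fintype.card A) (S : Finset G) (he : (1 : G) ∈ S)
    (p : S → A) (r : G) (hr : r ∈ S)
    (hnc : ¬ ∀ s t : S, p s = p t)
    (hq : ∀ s t : S, (s : G) ≠ r → (t : G) ≠ r → p s = p t)
    (a : A) (ha : a ≠ p ⟨1, he⟩) :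
    tauP S p a he ∘ tauP S p a he = tauP S p a he ↔
      ((∀ s : S, a ≠ p s) ∨ (r ≠ 1 ∧ r * r ∈ S) ∨ (r = 1 ∧ ∀ s ∈ S, s⁻¹ ∈ S)) := by
  classical
  -- basic formula for tauP
  have htau : ∀ (x : G → A) (g : G),
      tauP S p a he x g = if (fun s : S => x (g * (s : G))) = p then a else x g := by
    intro x g
    have hre : restrictPat S (shift g⁻¹ x) = fun s : S => x (g * (s : G)) := by
      funext s; simp [restrictPat, shift]
    show muP S p a he (restrictPat S (shift g⁻¹ x)) = _
    rw [hre]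
    unfold muP
    by_cases h : (fun s : S => x (g * (s : G))) = p
    · rw [if_pos h, if_pos h]
    · rw [if_neg h, if_neg h]; show x (g * 1) = x g; rw [mul_one]
  -- key reformulation: idempotence ↔ p never appears in an image of tauP
  have hkey : tauP S p a he ∘ tauP S p a he = tauP S p a he ↔
      ∀ (x : G → A) (g : G), (fun s : S => tauP S p a he x (g * (s : G))) ≠ p := by
    constructor
    · intro hid x g hm
      have h1 : tauP S p a he (tauP S p a he x) g = a := by rw [htau, if_pos hm]
      have h2 : tauP S p a he x (g * 1) = p ⟨1, he⟩ := congrFun hm ⟨1, he⟩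
      rw [mul_one] at h2
      have h3 : tauP S p a he (tauP S p a he x) g = tauP S p a he x g :=
        congrFun (congrFun hid x) g
      exact ha (h1.symm.trans (h3.trans h2))
    · intro h
      funext x g
      show tauP S p a he (tauP S p a he x) g = tauP S p a he x g
      rw [htau, if_neg (h x g)]
  -- nonconstancy data
  push_neg at hnc
  obtain ⟨u, v, huv⟩ := hnc
  have hbase : ∃ s₁ : S, (s₁ : G) ≠ r ∧ p ⟨r, hr⟩ ≠ p s₁ := by
    by_cases hu : (u : G) = r
    · have hu' : u = (⟨r, hr⟩ : S) := Subtype.ext hu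
      by_cases hv : (v : G) = r
      · have hv' : v = (⟨r, hr⟩ : S) := Subtype.ext hv
        exact absurd (by rw [hu', hv']) huv
      · exact ⟨v, hv, by rwa [hu'] at huv⟩
    · by_cases hv : (v : G) = r
      · have hv' : v = (⟨r, hr⟩ : S) := Subtype.ext hv
        refine ⟨u, hu, ?_⟩
        rw [hv'] at huv
        exact fun h => huv h.symm
      · exact absurd (hq u v hu hv) huv
  obtain ⟨s₁, hs₁r, hcb⟩ := hbase
  have hpb : ∀ s : S, (s : G) ≠ r → p s = p s₁ := fun s hs => hq s s₁ hs hs₁r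
  -- final contradiction helper : x matches p at g while tauP x matches p at g
  have finContr : ∀ (x : G → A) (g : G), (fun s : S => x (g * (s : G))) = p →
      (fun s : S => tauP S p a he x (g * (s : G))) = p → False := by
    intro x g hMg hm
    have h1' : tauP S p a he x g = a := by rw [htau, if_pos hMg]
    have h2' : tauP S p a he x (g * 1) = p ⟨1, he⟩ := congrFun hm ⟨1, he⟩
    rw [mul_one] at h2'
    exact ha (h1'.symm.trans h2')
  -- condition (1) implies no match
  have noMatch1 : (∀ s : S, a ≠ p s) →
      ∀ (x : G → A) (g : G), (fun s : S => tauP S p a he x (g * (s : G))) ≠ p := by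
    intro h1 x g hm
    have hx : ∀ s : S, x (g * (s : G)) = p s := by
      intro s
      have hts : tauP S p a he x (g * (s : G)) = p s := congrFun hm s
      rw [htau] at hts
      by_cases hM : (fun t : S => x (g * (s : G) * (t : G))) = p
      · rw [if_pos hM] at hts; exact absurd hts (h1 s)
      · rwa [if_neg hM] at hts
    exact finContr x g (funext hx) hm
  -- fact : if a is some pattern value and r ≠ 1 then a = p ⟨r,hr⟩
  have hacOf : r ≠ 1 → ∀ s₀ : S, a = p s₀ → a = p ⟨r, hr⟩ := by
    intro hr1 s₀ hs₀
    by_cases hs : (s₀ : G) = r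
    · have hs' : s₀ = (⟨r, hr⟩ : S) := Subtype.ext hs
      rw [hs₀, hs']
    · exfalso
      have h1 : p s₀ = p s₁ := hpb s₀ hs
      have h2 : p ⟨1, he⟩ = p s₁ := hpb ⟨1, he⟩ (fun h => hr1 h.symm)
      exact ha (hs₀.trans (h1.trans h2.symm))
  -- fact : if a is some pattern value and r = 1 then a = p s₁
  have habOf : r = 1 → ∀ s₀ : S, a = p s₀ → a = p s₁ := by
    intro hr1 s₀ hs₀
    by_cases hs : (s₀ : G) = 1
    · have hs' : s₀ = (⟨1, he⟩ : S) := Subtype.ext hs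
      exact absurd (hs₀.trans (by rw [hs'])) ha
    · exact hs₀.trans (hpb s₀ (by rw [hr1]; exact hs))
  -- condition (2) implies no match (given a = p ⟨r,hr⟩)
  have noMatch2 : a = p ⟨r, hr⟩ → r ≠ 1 → r * r ∈ S →
      ∀ (x : G → A) (g : G), (fun s : S => tauP S p a he x (g * (s : G))) ≠ p := by
    intro hac hr1 hr2 x g hm
    have hA : ∀ s : S, (s : G) ≠ r → x (g * (s : G)) = p s := by
      intro s hs
      have hts : tauP S p a he x (g * (s : G)) = p s := congrFun hm s
      rw [htau] at hts
      by_cases hM : (fun t : S => x (g * (s : G) * (t : G))) = p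
      · rw [if_pos hM] at hts
        exact absurd (hac.symm.trans (hts.trans (hpb s hs))) hcb
      · rwa [if_neg hM] at hts
    have hrrr : r * r ≠ r := fun h => hr1 (mul_eq_left.mp h)
    have hBnm : ¬ (fun t : S => x (g * r * (t : G))) = p := by
      intro hM
      have h1 : x (g * r * r) = p ⟨r, hr⟩ := congrFun hM ⟨r, hr⟩
      have h2 : x (g * (r * r)) = p (⟨r * r, hr2⟩ : S) := hA ⟨r * r, hr2⟩ hrrr
      rw [← mul_assoc] at h2
      exact hcb ((h1.symm.trans h2).trans (hpb ⟨r * r, hr2⟩ hrrr))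
    have hC : x (g * r) = p ⟨r, hr⟩ := by
      have hts : tauP S p a he x (g * r) = p ⟨r, hr⟩ := congrFun hm ⟨r, hr⟩
      rw [htau, if_neg hBnm] at hts
      exact hts
    have hx : ∀ s : S, x (g * (s : G)) = p s := by
      intro s
      by_cases hs : (s : G) = r
      · have hs' : s = (⟨r, hr⟩ : S) := Subtype.ext hs
        rw [hs']; exact hC
      · exact hA s hs
    exact finContr x g (funext hx) hm
  -- condition (3) implies no match (given a = p s₁)
  have noMatch3 : a = p s₁ → r = 1 → (∀ s ∈ S, s⁻¹ ∈ S) →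
      ∀ (x : G → A) (g : G), (fun s : S => tauP S p a he x (g * (s : G))) ≠ p := by
    intro hab hr1 hsym x g hm
    have hc1 : p ⟨r, hr⟩ = p ⟨1, he⟩ := by
      have hre : (⟨r, hr⟩ : S) = ⟨1, he⟩ := Subtype.ext hr1
      rw [hre]
    have hts : tauP S p a he x (g * 1) = p ⟨1, he⟩ := congrFun hm ⟨1, he⟩
    rw [mul_one] at hts
    have hng : ¬ (fun t : S => x (g * (t : G))) = p := by
      intro hM
      have h1 : tauP S p a he x g = a := by rw [htau, if_pos hM]
      rw [h1] at hts
      exact ha hts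
    have hxg : x g = p ⟨1, he⟩ := by
      rw [htau, if_neg hng] at hts; exact hts
    have hA : ∀ s : S, (s : G) ≠ 1 → x (g * (s : G)) = p s := by
      intro s hs
      have hts2 : tauP S p a he x (g * (s : G)) = p s := congrFun hm s
      rw [htau] at hts2
      by_cases hM : (fun t : S => x (g * (s : G) * (t : G))) = p
      · exfalso
        have hinv : ((s : G))⁻¹ ∈ S := hsym s s.2
        have h1 : x (g * (s : G) * ((s : G))⁻¹) = p ⟨((s : G))⁻¹, hinv⟩ :=
          congrFun hM ⟨_, hinv⟩
        rw [mul_inv_cancel_right] at h1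
        have hinv1 : ((s : G))⁻¹ ≠ r := by rw [hr1]; exact inv_ne_one.mpr hs
        have h2 : x g = p s₁ := h1.trans (hpb _ hinv1)
        have h3 : p ⟨1, he⟩ = p s₁ := hxg.symm.trans h2
        exact hcb (hc1.trans h3)
      · rwa [if_neg hM] at hts2
    have hx : ∀ s : S, x (g * (s : G)) = p s := by
      intro s
      by_cases hs : (s : G) = 1
      · have hs' : s = (⟨1, he⟩ : S) := Subtype.ext hs
        rw [hs']
        show x (g * (1 : G)) = p ⟨1, he⟩
        rw [mul_one]; exact hxg
      · exact hA s hs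
    exact hng (funext hx)
  -- construction for ¬(2'), r ≠ 1, r*r ∉ S, a = p ⟨r,hr⟩ : produces a match
  have build2 : a = p ⟨r, hr⟩ → r ≠ 1 → r * r ∉ S →
      ∃ (x : G → A) (g : G), (fun s : S => tauP S p a he x (g * (s : G))) = p := by
    intro hac hr1 hrr
    set x : G → A := fun h => if h = r * r then p ⟨r, hr⟩ else p s₁ with hxdef
    have hxval : ∀ h : G, x h = if h = r * r then p ⟨r, hr⟩ else p s₁ := fun h => rfl
    have hMr : (fun t : S => x (r * (t : G))) = p := by
      funext t
      by_cases ht : (t : G) = r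
      · have ht' : t = (⟨r, hr⟩ : S) := Subtype.ext ht
        rw [ht']
        show x (r * r) = p ⟨r, hr⟩
        rw [hxval, if_pos rfl]
      · show x (r * (t : G)) = p t
        rw [hxval, if_neg (fun h => ht (mul_left_cancel h)), (hpb t ht).symm]
    have hNM : ∀ h : G, h ≠ r → ¬ (fun t : S => x (h * (t : G))) = p := by
      intro h hh hM
      have h1 : x (h * r) = p ⟨r, hr⟩ := congrFun hM ⟨r, hr⟩
      have h2 : h * r = r * r := by
        by_contra hne
        rw [hxval, if_neg hne] at h1
        exact hcb h1.symm
      exact hh (mul_right_cancel h2)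
    refine ⟨x, 1, funext fun s => ?_⟩
    show tauP S p a he x (1 * (s : G)) = p s
    rw [one_mul]
    by_cases hs : (s : G) = r
    · have hs' : s = (⟨r, hr⟩ : S) := Subtype.ext hs
      rw [hs']
      show tauP S p a he x r = p ⟨r, hr⟩
      rw [htau, if_pos hMr]; exact hac
    · have hsne : (s : G) ≠ r * r := fun h => hrr (h ▸ s.2)
      rw [htau, if_neg (hNM (s : G) hs), hxval, if_neg hsne]
      exact (hpb s hs).symm
  -- construction for ¬(3'), r = 1, ∃ s₀ ∈ S, s₀⁻¹ ∉ S, a = p s₁ : produces a match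
  have build3 : a = p s₁ → r = 1 → ∀ s₀ ∈ S, s₀⁻¹ ∉ S →
      ∃ (x : G → A) (g : G), (fun s : S => tauP S p a he x (g * (s : G))) = p := by
    intro hab hr1 s₀ hs₀ hs₀inv
    have hc1 : p ⟨r, hr⟩ = p ⟨1, he⟩ := by
      have hre : (⟨r, hr⟩ : S) = ⟨1, he⟩ := Subtype.ext hr1
      rw [hre]
    have hs₀1 : s₀ ≠ 1 := by
      intro h; apply hs₀inv; rw [h, inv_one]; exact he
    set x : G → A := fun h => if h = 1 ∨ h = s₀ then p ⟨r, hr⟩ else p s₁ with hxdef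
    have hxval : ∀ h : G, x h = if h = 1 ∨ h = s₀ then p ⟨r, hr⟩ else p s₁ := fun h => rfl
    have hM0 : (fun t : S => x (s₀ * (t : G))) = p := by
      funext t
      by_cases ht : (t : G) = 1
      · have ht' : t = (⟨1, he⟩ : S) := Subtype.ext ht
        rw [ht']
        show x (s₀ * 1) = p ⟨1, he⟩
        rw [mul_one, hxval, if_pos (Or.inr rfl)]
        exact hc1
      · show x (s₀ * (t : G)) = p t
        have hne : ¬ (s₀ * (t : G) = 1 ∨ s₀ * (t : G) = s₀) := by
          rintro (h | h)
          · have hti : (t : G) = s₀⁻¹ := eq_inv_of_mul_eq_one_right h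
            exact hs₀inv (hti ▸ t.2)
          · exact ht (mul_left_cancel (h.trans (mul_one s₀).symm))
        rw [hxval, if_neg hne]
        exact (hpb t (by rw [hr1]; exact ht)).symm
    have hNM : ∀ h : G, h ≠ s₀ → ¬ (fun t : S => x (h * (t : G))) = p := by
      intro h hh hM
      have h1 : x (h * 1) = p ⟨1, he⟩ := congrFun hM ⟨1, he⟩
      rw [mul_one] at h1
      have hmem : h = 1 ∨ h = s₀ := by
        by_contra hne
        rw [hxval, if_neg hne] at h1
        exact hcb (hc1.trans h1.symm)
      rcases hmem with h1' | h1'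
      · have h2 : x (h * s₀) = p ⟨s₀, hs₀⟩ := congrFun hM ⟨s₀, hs₀⟩
        rw [h1', one_mul, hxval, if_pos (Or.inr rfl)] at h2
        have h3 : p (⟨s₀, hs₀⟩ : S) = p s₁ := hpb ⟨s₀, hs₀⟩ (by rw [hr1]; exact hs₀1)
        exact hcb (h2.trans h3)
      · exact hh h1'
    refine ⟨x, 1, funext fun s => ?_⟩
    show tauP S p a he x (1 * (s : G)) = p s
    rw [one_mul]
    by_cases hs : (s : G) = s₀
    · rw [htau, if_pos (by rw [hs]; exact hM0)]
      have : p s = p s₁ := hpb s (by rw [hr1, hs]; exact hs₀1)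
      rw [this]; exact hab
    · rw [htau, if_neg (hNM (s : G) hs)]
      by_cases h1 : (s : G) = 1
      · have h1' : s = (⟨1, he⟩ : S) := Subtype.ext h1
        rw [hxval, if_pos (Or.inl h1), h1']
        exact hc1
      · rw [hxval, if_neg (by rintro (h | h); exacts [h1 h, hs h])]
        exact (hpb s (by rw [hr1]; exact h1)).symm
  -- main assembly
  rw [hkey]
  constructor
  · intro hno
    by_contra hR
    push_neg at hR
    obtain ⟨⟨s₀', hs₀'⟩, h2, h3⟩ := hR
    by_cases hr1 : r = 1
    · have hab : a = p s₁ := habOf hr1 s₀' hs₀'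
      obtain ⟨t₀, ht₀S, ht₀inv⟩ := h3 hr1
      obtain ⟨x, g, hxm⟩ := build3 hab hr1 t₀ ht₀S ht₀inv
      exact hno x g hxm
    · have hac : a = p ⟨r, hr⟩ := hacOf hr1 s₀' hs₀'
      obtain ⟨x, g, hxm⟩ := build2 hac hr1 (h2 hr1)
      exact hno x g hxm
  · rintro (h1 | ⟨hr1, hrr⟩ | ⟨hr1, hsym⟩)
    · exact noMatch1 h1
    · by_cases hex : ∀ s : S, a ≠ p s
      · exact noMatch1 hex
      · push_neg at hex
        obtain ⟨s₀, hs₀⟩ := hex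
        exact noMatch2 (hacOf hr1 s₀ hs₀) hr1 hrr
    · by_cases hex : ∀ s : S, a ≠ p s
      · exact noMatch1 hex
      · push_neg at hex
        obtain ⟨s₀, hs₀⟩ := hex
        exact noMatch3 (habOf hr1 s₀ hs₀) hr1 hsym
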